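/- Let T be a finite nonempty set and let Υ∈ℕ^T be a T-vector with Υ(t)≥1 for every t∈T and with gcd of its components equal to 1 (a prime T-vector with full support). Then there exists a word w over T with Parikh vector P(w)=Υ and a weighted marked graph system with transition set T that solves the circular LTS induced by w (weak synthesis of a WMG with circular reachability graph). -/

import Mathlib

set_option linter.unusedSectionVars false
set_option maxHeartbeats 1000000
/-- A labelled transition system with initial state. -/
structure LTS (S L : Type) where
  tr : S → L → S → Prop
  init : S

namespace LTS

/-- Reachability between states of an LTS (directed paths of arcs). -/
def reach {S L : Type} (A : LTS S L) : S → S → Prop :=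
  Relation.ReflTransGen (fun s s' => ∃ t, A.tr s t s')

/-- An LTS is reversible if every state is reachable from the initial state
and the initial state is reachable from every state. -/
def reversible {S L : Type} (A : LTS S L) : Prop :=
  ∀ s : S, A.reach A.init s ∧ A.reach s A.init

end LTS

/-- Isomorphism of labelled transition systems. -/
def ltsIso {S1 S2 L : Type} (A : LTS S1 L) (B : LTS S2 L) : Prop :=
  ∃ ζ : S1 ≃ S2, ζ A.init = B.init ∧ ∀ s t s', A.tr s t s' ↔ B.tr (ζ s) t (ζ s')

/-- A weighted Petri net with places `P` and transitions `T`: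
`pre p t` is the weight of the arc from `p` to `t`, `post t p` of the arc from `t` to `p`. -/
structure PetriNet (P T : Type) where
  pre : P → T → ℕ
  post : T → P → ℕ

namespace PetriNet

variable {P T : Type}

/-- A transition `t` is enabled at marking `M`. -/
def enabled (N : PetriNet P T) (M : P → ℕ) (t : T) : Prop :=
  ∀ p, N.pre p t ≤ M p

/-- A place `p` is enabled by a marking `M`. -/
def placeEnabled (N : PetriNet P T) (M : P → ℕ) (p : P) : Prop :=
  ∀ t, N.pre p t ≤ M p

/-- The marking obtained by firing `t` at `M`. -/
def fire (N : PetriNet P T) (M : P → ℕ) (t : T) : P → ℕ :=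
  fun p => M p - N.pre p t + N.post t p

/-- `M [t⟩ M'`. -/
def step (N : PetriNet P T) (M : P → ℕ) (t : T) (M' : P → ℕ) : Prop :=
  N.enabled M t ∧ M' = N.fire M t

/-- A marking `M'` is reachable from `M` by a finite sequence of firings. -/
def Reach (N : PetriNet P T) (M M' : P → ℕ) : Prop :=
  Relation.ReflTransGen (fun M1 M2 => ∃ t, N.step M1 t M2) M M'

/-- A sequence of transitions is firable from a marking. -/
def firable (N : PetriNet P T) : (P → ℕ) → List T → Prop
  | _, [] => True
  | M, t :: σ => N.enabled M t ∧ N.firable (N.fire M t) σ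

/-- The marking reached after firing a sequence of transitions. -/
def fireSeq (N : PetriNet P T) : (P → ℕ) → List T → (P → ℕ)
  | M, [] => M
  | M, t :: σ => N.fireSeq (N.fire M t) σ

/-- A net is choice-free if every place has at most one output transition. -/
def choiceFree (N : PetriNet P T) : Prop :=
  ∀ p t t', 0 < N.pre p t → 0 < N.pre p t' → t = t'

/-- A weighted marked graph: each place has at most one output and at most one input transition. -/
def wmg (N : PetriNet P T) : Prop :=
  N.choiceFree ∧ ∀ p t t', 0 < N.post t p → 0 < N.post t' p → t = t'

/-- A net is pure if no place is a side condition of some transition. -/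
def isPure (N : PetriNet P T) : Prop :=
  ∀ p t, ¬(0 < N.pre p t ∧ 0 < N.post t p)

/-- Liveness: from every reachable marking, every transition can eventually fire again. -/
def live (N : PetriNet P T) (M0 : P → ℕ) : Prop :=
  ∀ (t : T) (M : P → ℕ), N.Reach M0 M → ∃ M', N.Reach M M' ∧ N.enabled M' t

/-- The reachability graph of a system, as an LTS on the reachable markings. -/
def RG (N : PetriNet P T) (M0 : P → ℕ) : LTS {M : P → ℕ // N.Reach M0 M} T where
  tr := fun M t M' => N.step M.1 t M'.1
  init := ⟨M0, Relation.ReflTransGen.refl⟩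

end PetriNet

/-- A system solves an LTS if its reachability graph is isomorphic to it. -/
def Solves {Pl T S : Type} (N : PetriNet Pl T) (M0 : Pl → ℕ) (A : LTS S T) : Prop :=
  ltsIso (N.RG M0) A

/-- CF-solvability of an LTS. -/
def CFSolvable {S L : Type} (A : LTS S L) : Prop :=
  ∃ (k : ℕ) (N : PetriNet (Fin k) L) (M0 : Fin k → ℕ), N.choiceFree ∧ Solves N M0 A

/-- WMG-solvability of an LTS. -/
def WMGSolvable {S L : Type} (A : LTS S L) : Prop :=
  ∃ (k : ℕ) (N : PetriNet (Fin k) L) (M0 : Fin k → ℕ), N.wmg ∧ Solves N M0 A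

/-- Solvability of an LTS by a pure choice-free system. -/
def PureCFSolvable {S L : Type} (A : LTS S L) : Prop :=
  ∃ (k : ℕ) (N : PetriNet (Fin k) L) (M0 : Fin k → ℕ),
    N.choiceFree ∧ N.isPure ∧ Solves N M0 A

/-- The circular LTS induced by a (nonempty) word `w`. -/
def circLTS {L : Type} (w : List L) (hw : 0 < w.length) : LTS (Fin w.length) L where
  tr := fun s t s' => t = w.get s ∧ s'.val = (s.val + 1) % w.length
  init := ⟨0, hw⟩

/-- The Parikh vector of a word. -/
def parikh {L : Type} [DecidableEq L] (w : List L) (t : L) : ℕ := w.count t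

/-- A vector of naturals is prime if the gcd of its components equals 1. -/
def primeVec {L : Type} [Fintype L] (Υ : L → ℕ) : Prop := Finset.univ.gcd Υ = 1

/-- A word is cyclically solvable by a WMG. -/
def cyclicWMGSolvable {L : Type} (w : List L) : Prop :=
  ∃ (hw : 0 < w.length) (k : ℕ) (N : PetriNet (Fin k) L) (M0 : Fin k → ℕ),
    N.wmg ∧ Solves N M0 (circLTS w hw)

/-- A word is cyclically solvable by a CF net. -/
def cyclicCFSolvable {L : Type} (w : List L) : Prop :=
  ∃ (hw : 0 < w.length) (k : ℕ) (N : PetriNet (Fin k) L) (M0 : Fin k → ℕ),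
    N.choiceFree ∧ Solves N M0 (circLTS w hw)

/-- A circuit net: places `p_0 … p_{k-1}` and transitions `τ 0 … τ (k-1)` arranged in a
single alternating cycle, `τ i` being the unique output of `p_i` and the unique input
of `p_{i+1 mod k}`. -/
def isCircuit {k : ℕ} {L : Type} (hk : 0 < k) (N : PetriNet (Fin k) L) : Prop :=
  ∃ τ : Fin k ≃ L,
    (∀ (i : Fin k) (t : L), 0 < N.pre i t ↔ t = τ i) ∧
    (∀ (i : Fin k) (t : L), 0 < N.post t i ↔ t = τ ⟨(i.val + k - 1) % k, Nat.mod_lt _ hk⟩)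

/-- A word is cyclically solvable by a circuit system. -/
def cyclicCircuitSolvable {L : Type} (v : List L) : Prop :=
  ∃ (hv : 0 < v.length) (k : ℕ) (hk : 0 < k) (N : PetriNet (Fin k) L) (M0 : Fin k → ℕ),
    isCircuit hk N ∧ Solves N M0 (circLTS v hv)

/-- The ordered pair `a b` is circularly adjacent in `w`. -/
def cAdj {L : Type} (w : List L) (a b : L) : Prop :=
  a ≠ b ∧ ((∃ w1 w2, w = w1 ++ a :: b :: w2) ∨ ∃ w3, w = b :: w3 ++ [a])

/-- The projection of a word on a two-element sub-alphabet, as a word over that sub-alphabet. -/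
def projPair {L : Type} [DecidableEq L] (w : List L) (a b : L) :
    List {x : L // x = a ∨ x = b} :=
  w.filterMap (fun x => if h : x = a ∨ x = b then some ⟨x, h⟩ else none)

/-- The Parikh vector `P_jq` of the segment of `w` read circularly from state `s_j`
to state `s_q` (empty when `j = q`). -/
def segParikh {L : Type} [DecidableEq L] (w : List L) (hw : 0 < w.length)
    (j q : Fin w.length) (t : L) : ℕ :=
  ((List.range ((q.val + w.length - j.val) % w.length)).map
    (fun i => w.get ⟨(j.val + i) % w.length, Nat.mod_lt _ hw⟩)).count t

/-- A region of an LTS. -/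
def isRegion {S L : Type} (A : LTS S L) (R : S → ℕ) (B F : L → ℕ) : Prop :=
  ∀ s t s', A.tr s t s' → B t ≤ R s ∧ R s' = R s - B t + F t

/-- `gcd_p`: the gcd of all (nonzero) input and output weights of a place. -/
def gcdPlace {Pl T : Type} [Fintype T] (N : PetriNet Pl T) (p : Pl) : ℕ :=
  Finset.univ.gcd (fun t => Nat.gcd (N.pre p t) (N.post t p))

/-- Conservativeness of a net. -/
def conservative {Pl T : Type} [Fintype Pl] (N : PetriNet Pl T) : Prop :=
  ∃ X : Pl → ℕ, (∀ p, 1 ≤ X p) ∧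
    ∀ t, ∑ p, (X p : ℤ) * ((N.post t p : ℤ) - (N.pre p t : ℤ)) = 0

/-- The P-subnet induced by a family of places. -/
def restrictNet {Pl T : Type} {k : ℕ} (N : PetriNet Pl T) (π : Fin k → Pl) :
    PetriNet (Fin k) T where
  pre := fun i t => N.pre (π i) t
  post := fun t i => N.post t (π i)

namespace Stmt18
open Finset

noncomputable section
variable {L : Type} [Fintype L] [DecidableEq L] [Nonempty L] (a : L → ℕ)

def rho (i : L) : ℕ := (Fintype.equivFin L i).val

lemma rho_inj {i j : L} (h : rho i = rho j) : i = j :=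
  (Fintype.equivFin L).injective (Fin.ext h)

def keyf (N : L → ℕ) (i : L) : ℚ ×ₗ ℕ := toLex ((N i : ℚ) / (a i : ℚ), rho i)

def nextL (N : L → ℕ) : L :=
  (Finset.exists_min_image Finset.univ (keyf a N) Finset.univ_nonempty).choose

lemma nextL_spec (N : L → ℕ) (l : L) : keyf a N (nextL a N) ≤ keyf a N l := by
  have h := (Finset.exists_min_image Finset.univ (keyf a N) Finset.univ_nonempty).choose_spec
  exact h.2 l (Finset.mem_univ l)

lemma nextL_le (ha : ∀ i, 1 ≤ a i) (N : L → ℕ) (l : L) :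
    N (nextL a N) * a l ≤ N l * a (nextL a N) ∧
    (N (nextL a N) * a l = N l * a (nextL a N) → nextL a N ≠ l → rho (nextL a N) < rho l) := by
  set c := nextL a N
  have hc : (0:ℚ) < a c := by exact_mod_cast ha c
  have hl : (0:ℚ) < a l := by exact_mod_cast ha l
  have h := nextL_spec a N l
  rw [keyf, keyf, Prod.Lex.le_iff] at h
  rcases h with h | ⟨h1, h2⟩
  · simp only [ofLex_toLex] at h
    rw [div_lt_div_iff₀ hc hl] at h
    have : N c * a l < N l * a c := by exact_mod_cast h
    exact ⟨this.le, fun he _ => absurd he this.ne⟩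
  · simp only [ofLex_toLex] at h1 h2
    rw [div_eq_div_iff hc.ne' hl.ne'] at h1
    have h1' : N c * a l = N l * a c := by exact_mod_cast h1
    refine ⟨h1'.le, fun _ hne => lt_of_le_of_ne h2 ?_⟩
    exact fun hr => hne (rho_inj hr)

lemma nextL_lt (ha : ∀ i, 1 ≤ a i) (N : L → ℕ) (hub : ∀ i, N i ≤ a i)
    (hex : ∃ l, N l < a l) : N (nextL a N) < a (nextL a N) := by
  obtain ⟨l, hl⟩ := hex
  rcases lt_or_eq_of_le (hub (nextL a N)) with h | h
  · exact h
  · exfalso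
    have h1 := (nextL_le a ha N l).1
    rw [h] at h1
    nlinarith [ha l, ha (nextL a N)]

def Nst : ℕ → L → ℕ
  | 0 => fun _ => 0
  | m + 1 => fun i => Nst m i + if i = nextL a (Nst m) then 1 else 0

def wseq (m : ℕ) : L := nextL a (Nst a m)

def KK : ℕ := ∑ i, a i

lemma sum_Nst (m : ℕ) : ∑ i, Nst a m i = m := by
  induction m with
  | zero => simp [Nst]
  | succ m ih =>
    simp only [Nst, Finset.sum_add_distrib, ih, Finset.sum_ite_eq', Finset.mem_univ, if_true]

lemma Nst_le (ha : ∀ i, 1 ≤ a i) : ∀ m, m ≤ KK a → ∀ i, Nst a m i ≤ a i := by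
  intro m
  induction m with
  | zero => intro _ i; simp [Nst]
  | succ m ih =>
    intro hm i
    have hm' : m ≤ KK a := le_of_lt (Nat.lt_of_succ_le hm)
    have hub := ih hm'
    have hex : ∃ l, Nst a m l < a l := by
      by_contra hno
      push_neg at hno
      have : ∀ l, Nst a m l = a l := fun l => le_antisymm (hub l) (hno l)
      have : (m : ℕ) = KK a := by
        rw [← sum_Nst a m, KK]; exact Finset.sum_congr rfl fun l _ => this l
      omega
    have hlt := nextL_lt a ha (Nst a m) hub hex
    simp only [Nst]
    by_cases hi : i = nextL a (Nst a m)
    · subst hi; simpa using hlt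
    · simp [hi]; exact hub i

lemma wseq_lt (ha : ∀ i, 1 ≤ a i) (m : ℕ) (hm : m < KK a) :
    Nst a m (wseq a m) < a (wseq a m) := by
  have hub := Nst_le a ha m (le_of_lt hm)
  have hex : ∃ l, Nst a m l < a l := by
    by_contra hno
    push_neg at hno
    have heq : ∀ l, Nst a m l = a l := fun l => le_antisymm (hub l) (hno l)
    have : (m : ℕ) = KK a := by
      rw [← sum_Nst a m, KK]; exact Finset.sum_congr rfl fun l _ => heq l
    omega
  exact nextL_lt a ha (Nst a m) hub hex

lemma Nst_mono {m m' : ℕ} (h : m ≤ m') (i : L) : Nst a m i ≤ Nst a m' i := by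
  induction h with
  | refl => exact le_rfl
  | step _ ih => exact le_trans ih (Nat.le_add_right _ _)

lemma Nst_K (ha : ∀ i, 1 ≤ a i) : Nst a (KK a) = a := by
  funext i
  have hsum : ∑ j, Nst a (KK a) j = ∑ j, a j := by rw [sum_Nst]; rfl
  exact (Finset.sum_eq_sum_iff_of_le (fun j _ => Nst_le a ha (KK a) le_rfl j)).mp hsum i
    (Finset.mem_univ i)

lemma F2 (ha : ∀ i, 1 ≤ a i) (m : ℕ) : ∀ c l : L, c ≠ l →
    a c * Nst a m l ≤ a l * Nst a m c + a c ∧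
    (a c * Nst a m l = a l * Nst a m c + a c → rho l < rho c) := by
  induction m with
  | zero =>
    intro c l _
    constructor
    · simp [Nst]
    · intro h; simp [Nst] at h; exact absurd h.symm (by have := ha c; omega)
  | succ m ih =>
    intro c l hcl
    obtain ⟨ih1, ih2⟩ := ih c l hcl
    by_cases hl : l = nextL a (Nst a m)
    · have hc : ¬ (c = nextL a (Nst a m)) := by rw [← hl]; exact hcl
      have hF := nextL_le a ha (Nst a m) c
      rw [← hl] at hF
      simp only [Nst, if_pos hl, if_neg hc]
      have hdist : a c * (Nst a m l + 1) = a c * Nst a m l + a c := by ring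
      constructor
      · rw [hdist]
        have := hF.1
        nlinarith
      · intro he
        rw [hdist] at he
        have he' : Nst a m l * a c = Nst a m c * a l := by nlinarith
        exact hF.2 he' (fun h => hcl h.symm)
    · by_cases hc : c = nextL a (Nst a m)
      · simp only [Nst, if_pos hc, if_neg hl, add_zero]
        have hdist : a l * (Nst a m c + 1) = a l * Nst a m c + a l := by ring
        rw [hdist]
        constructor
        · have := ha l; omega
        · intro he; have := ha l; omega
      · simp only [Nst, if_neg hc, if_neg hl, add_zero]
        exact ⟨ih1, ih2⟩

lemma star (ha : ∀ i, 1 ≤ a i) (m r : ℕ) (l : L) (hl : l ≠ wseq a m) :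
    a l * Nst a m (wseq a m) + a (wseq a m) * Nst a r l
      < a (wseq a m) * Nst a m l + a (wseq a m) + a l * Nst a r (wseq a m) := by
  have hF1 : Nst a m (wseq a m) * a l ≤ Nst a m l * a (wseq a m) ∧
      (Nst a m (wseq a m) * a l = Nst a m l * a (wseq a m) →
        wseq a m ≠ l → rho (wseq a m) < rho l) := nextL_le a ha (Nst a m) l
  have hF2 := F2 a ha r (wseq a m) l (fun h => hl h.symm)
  rcases lt_or_eq_of_le hF1.1 with h1 | h1
  · nlinarith [hF2.1]
  · rcases lt_or_eq_of_le hF2.1 with h2 | h2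
    · nlinarith
    · exfalso
      have hr1 := hF1.2 h1 (fun h => hl h.symm)
      have hr2 := hF2.2 h2
      omega

def wrd : List L := (List.range (KK a)).map (wseq a)

lemma count_wrd (m : ℕ) (t : L) : ((List.range m).map (wseq a)).count t = Nst a m t := by
  induction m with
  | zero => simp [Nst]
  | succ m ih =>
    rw [List.range_succ, List.map_append, List.count_append]
    simp only [Nst, ih, List.map_singleton, List.count_singleton']
    by_cases h : t = nextL a (Nst a m)
    · rw [if_pos h, if_pos (by exact h.symm)]
    · rw [if_neg h, if_neg (fun hh => h hh.symm)]

lemma KK_pos : 0 < KK a ↔ 0 < KK a := Iff.rfl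

lemma KK_pos' (ha : ∀ i, 1 ≤ a i) : 0 < KK a := by
  obtain ⟨i⟩ := (inferInstance : Nonempty L)
  have h1 : a i ≤ KK a := Finset.single_le_sum (fun j _ => Nat.zero_le _) (Finset.mem_univ i)
  have := ha i
  omega

section Net

abbrev PL (L : Type) [DecidableEq L] : Type := {q : L × L // q.1 ≠ q.2}

variable (L) in
def kP : ℕ := Fintype.card (PL L)

variable (L) in
def epq : PL L ≃ Fin (kP L) := Fintype.equivFin _

def pr (j : Fin (kP L)) : L × L := ((epq L).symm j).1

lemma pr_ne (j : Fin (kP L)) : (pr j).1 ≠ (pr j).2 := ((epq L).symm j).2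

lemma pr_surj {c l : L} (h : c ≠ l) : ∃ j : Fin (kP L), pr j = (c, l) :=
  ⟨epq L ⟨(c, l), h⟩, by simp [pr]⟩

def net : PetriNet (Fin (kP L)) L where
  pre := fun j t => if t = (pr j).2 then a (pr j).1 else 0
  post := fun t j => if t = (pr j).1 then a (pr j).2 else 0

lemma net_wmg : (net a).wmg := by
  constructor
  · intro p t t' h1 h2
    simp only [net] at h1 h2
    split_ifs at h1 h2 with e1 e2
    · exact e1.trans e2.symm
    all_goals omega
  · intro p t t' h1 h2
    simp only [net] at h1 h2
    split_ifs at h1 h2 with e1 e2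
    · exact e1.trans e2.symm
    all_goals omega

def xz (i l : L) (m : ℕ) : ℤ := (a l : ℤ) * Nst a m i - (a i : ℤ) * Nst a m l

lemma xz_zero (i l : L) : xz a i l 0 = 0 := by simp [xz, Nst]

lemma xz_K (ha : ∀ i, 1 ≤ a i) (i l : L) : xz a i l (KK a) = 0 := by
  simp [xz, Nst_K a ha]; ring

lemma xz_step (i l : L) (m : ℕ) :
    xz a i l (m + 1) = xz a i l m + (if i = wseq a m then (a l : ℤ) else 0)
      - (if l = wseq a m then (a i : ℤ) else 0) := by
  simp only [xz, Nst, wseq]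
  by_cases hi : i = nextL a (Nst a m) <;> by_cases hl : l = nextL a (Nst a m) <;>
    simp [hi, hl] <;> push_cast <;> ring

def mn (j : Fin (kP L)) : ℤ :=
  (insert 0 ((Finset.range (KK a)).image (fun m => xz a (pr j).1 (pr j).2 m))).min'
    (Finset.insert_nonempty _ _)

lemma mn_nonpos (j : Fin (kP L)) : mn a j ≤ 0 :=
  Finset.min'_le _ _ (Finset.mem_insert_self _ _)

lemma mn_le {m : ℕ} (hm : m < KK a) (j : Fin (kP L)) :
    mn a j ≤ xz a (pr j).1 (pr j).2 m :=
  Finset.min'_le _ _ (Finset.mem_insert_of_mem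
    (Finset.mem_image_of_mem _ (Finset.mem_range.mpr hm)))

lemma mn_le' (ha : ∀ i, 1 ≤ a i) {m : ℕ} (hm : m ≤ KK a) (j : Fin (kP L)) :
    mn a j ≤ xz a (pr j).1 (pr j).2 m := by
  rcases Nat.lt_or_ge m (KK a) with h | h
  · exact mn_le a h j
  · have : m = KK a := le_antisymm hm h
    rw [this, xz_K a ha]
    exact mn_nonpos a j

lemma exists_mn (ha : ∀ i, 1 ≤ a i) (j : Fin (kP L)) :
    ∃ r < KK a, xz a (pr j).1 (pr j).2 r = mn a j := by
  have hmem := Finset.min'_mem (insert 0 ((Finset.range (KK a)).image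
    (fun m => xz a (pr j).1 (pr j).2 m))) (Finset.insert_nonempty _ _)
  rw [Finset.mem_insert] at hmem
  rcases hmem with h | h
  · exact ⟨0, KK_pos' a ha, by rw [xz_zero, mn, h]⟩
  · obtain ⟨r, hr, hxr⟩ := Finset.mem_image.mp h
    exact ⟨r, Finset.mem_range.mp hr, hxr⟩

def Mk (m : ℕ) : Fin (kP L) → ℕ := fun j => (xz a (pr j).1 (pr j).2 m - mn a j).toNat

lemma Mk_K (ha : ∀ i, 1 ≤ a i) : Mk a (KK a) = Mk a 0 :=
  funext fun j => by rw [Mk, Mk, xz_K a ha, xz_zero]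

lemma Mk_mod (ha : ∀ i, 1 ≤ a i) {m : ℕ} (hm : m < KK a) :
    Mk a ((m + 1) % KK a) = Mk a (m + 1) := by
  rcases Nat.lt_or_ge (m + 1) (KK a) with h | h
  · rw [Nat.mod_eq_of_lt h]
  · have he : m + 1 = KK a := by omega
    rw [he, Nat.mod_self, Mk_K a ha]

lemma enabled_wseq (ha : ∀ i, 1 ≤ a i) {m : ℕ} (hm : m < KK a) :
    (net a).enabled (Mk a m) (wseq a m) := by
  intro j
  simp only [net]
  split_ifs with h
  · -- h : wseq a m = (pr j).2
    have h1 : ¬((pr j).1 = wseq a m) := fun hh => pr_ne j (hh.trans h)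
    have hstep := xz_step a (pr j).1 (pr j).2 m
    rw [if_neg h1, if_pos h.symm] at hstep
    have hmn := mn_le' a ha (show m + 1 ≤ KK a from hm) j
    simp only [Mk]
    omega
  · exact Nat.zero_le _

lemma blocked (ha : ∀ i, 1 ≤ a i) {m : ℕ} (hm : m < KK a) {t : L}
    (ht : t ≠ wseq a m) : ¬ (net a).enabled (Mk a m) t := by
  obtain ⟨j, hj⟩ := pr_surj (show wseq a m ≠ t from Ne.symm ht)
  intro hen
  have hs := hen j
  have h1 : (pr j).1 = wseq a m := by rw [hj]
  have h2 : (pr j).2 = t := by rw [hj]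
  simp only [net, Mk, h1, h2, eq_self_iff_true, if_true] at hs
  obtain ⟨r, hr, hxr⟩ := exists_mn a ha j
  rw [h1, h2] at hxr
  have hstar := star a ha m r t ht
  have hz : ((a t : ℤ) * Nst a m (wseq a m) + (a (wseq a m) : ℤ) * Nst a r t)
      < (a (wseq a m) : ℤ) * Nst a m t + a (wseq a m) + (a t : ℤ) * Nst a r (wseq a m) := by
    exact_mod_cast hstar
  simp only [xz] at hxr hs
  have hac := ha (wseq a m)
  omega

lemma fire_step (ha : ∀ i, 1 ≤ a i) {m : ℕ} (hm : m < KK a) :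
    (net a).fire (Mk a m) (wseq a m) = Mk a (m + 1) := by
  funext j
  have hij := pr_ne j
  have hstep := xz_step a (pr j).1 (pr j).2 m
  have hm0 := mn_le a hm j
  have hm1 := mn_le' a ha (show m + 1 ≤ KK a from hm) j
  simp only [PetriNet.fire, net, Mk]
  by_cases h2 : wseq a m = (pr j).2
  · have h1 : ¬((pr j).1 = wseq a m) := fun hh => hij (hh.trans h2)
    rw [if_neg h1, if_pos h2.symm] at hstep
    rw [if_pos h2, if_neg (fun hh : wseq a m = (pr j).1 => hij (hh.symm.trans h2))]
    omega
  · by_cases h1 : wseq a m = (pr j).1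
    · rw [if_pos h1.symm, if_neg (fun hh : (pr j).2 = wseq a m => h2 hh.symm)] at hstep
      rw [if_neg h2, if_pos h1]
      omega
    · rw [if_neg (fun hh : (pr j).1 = wseq a m => h1 hh.symm),
        if_neg (fun hh : (pr j).2 = wseq a m => h2 hh.symm)] at hstep
      rw [if_neg h2, if_neg h1]
      omega

lemma step_cyc (ha : ∀ i, 1 ≤ a i) {m : ℕ} (hm : m < KK a) :
    (net a).step (Mk a m) (wseq a m) (Mk a ((m + 1) % KK a)) :=
  ⟨enabled_wseq a ha hm, by rw [Mk_mod a ha hm, fire_step a ha hm]⟩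

lemma xz_eq_of_Mk_eq {m m' : ℕ} (hm : m < KK a) (hm' : m' < KK a)
    (h : Mk a m = Mk a m') {i l : L} (hil : i ≠ l) : xz a i l m = xz a i l m' := by
  obtain ⟨j, hj⟩ := pr_surj hil
  have hc := congrFun h j
  have h1 := mn_le a hm j
  have h2 := mn_le a hm' j
  simp only [Mk, hj] at hc h1 h2
  omega

lemma Nst_rel {m m' : ℕ} (h : ∀ i l : L, i ≠ l → xz a i l m = xz a i l m') (i : L) :
    (KK a : ℤ) * ((Nst a m i : ℤ) - Nst a m' i) = (a i : ℤ) * ((m : ℤ) - m') := by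
  have hK : (KK a : ℤ) = ∑ l, (a l : ℤ) := by rw [KK]; push_cast; rfl
  calc (KK a : ℤ) * ((Nst a m i : ℤ) - Nst a m' i)
      = ∑ l, (a l : ℤ) * ((Nst a m i : ℤ) - Nst a m' i) := by rw [hK, Finset.sum_mul]
    _ = ∑ l, (a i : ℤ) * ((Nst a m l : ℤ) - Nst a m' l) := by
        refine Finset.sum_congr rfl fun l _ => ?_
        by_cases hil : i = l
        · rw [hil]
        · have hx := h i l hil
          simp only [xz] at hx
          rw [mul_sub, mul_sub]
          omega
    _ = (a i : ℤ) * ((m : ℤ) - m') := by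
        rw [← Finset.mul_sum]
        congr 1
        rw [Finset.sum_sub_distrib]
        rw [← Nat.cast_sum, ← Nat.cast_sum, sum_Nst, sum_Nst]

lemma Mk_inj_aux (hprime : Finset.univ.gcd a = 1) {m m' : ℕ}
    (hm : m < KK a) (hm' : m' < KK a) (hle : m' ≤ m) (h : Mk a m = Mk a m') : m = m' := by
  have hrel := Nst_rel a (fun i l hil => xz_eq_of_Mk_eq a hm hm' h hil)
  have hdvd : ∀ i, KK a ∣ a i * (m - m') := by
    intro i
    have hcast : ((a i * (m - m') : ℕ) : ℤ) = (a i : ℤ) * ((m : ℤ) - m') := by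
      rw [Nat.cast_mul, Nat.cast_sub hle]
    have : (KK a : ℤ) ∣ ((a i * (m - m') : ℕ) : ℤ) := by
      refine ⟨(Nst a m i : ℤ) - Nst a m' i, ?_⟩
      rw [hcast, ← hrel i]
    exact_mod_cast this
  have hg : KK a ∣ Finset.univ.gcd (fun i => a i * (m - m')) :=
    Finset.dvd_gcd fun i _ => hdvd i
  have he : (Finset.univ.gcd fun i : L => a i * (m - m'))
      = Finset.univ.gcd fun i : L => (m - m') * a i := by
    congr 1; funext i; ring
  rw [he, Finset.gcd_mul_left, hprime, mul_one] at hg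
  have hn : normalize (m - m') = m - m' := by simp
  rw [hn] at hg
  have hlt : m - m' < KK a := by omega
  have h0 := Nat.eq_zero_of_dvd_of_lt hg hlt
  omega

lemma Mk_inj (hprime : Finset.univ.gcd a = 1) {m m' : ℕ}
    (hm : m < KK a) (hm' : m' < KK a) (h : Mk a m = Mk a m') : m = m' := by
  rcases le_total m' m with hle | hle
  · exact Mk_inj_aux a hprime hm hm' hle h
  · exact (Mk_inj_aux a hprime hm' hm hle h.symm).symm

lemma reach_Mk (ha : ∀ i, 1 ≤ a i) : ∀ m, m < KK a → (net a).Reach (Mk a 0) (Mk a m) := by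
  intro m
  induction m with
  | zero => intro _; exact Relation.ReflTransGen.refl
  | succ m ih =>
    intro hm
    have hm' : m < KK a := by omega
    exact Relation.ReflTransGen.tail (ih hm')
      ⟨wseq a m, enabled_wseq a ha hm', (fire_step a ha hm').symm⟩

lemma reach_char (ha : ∀ i, 1 ≤ a i) {M : Fin (kP L) → ℕ}
    (h : (net a).Reach (Mk a 0) M) : ∃ m, m < KK a ∧ M = Mk a m := by
  induction h with
  | refl => exact ⟨0, KK_pos' a ha, rfl⟩
  | tail h1 h2 ih =>
    obtain ⟨m, hm, rfl⟩ := ih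
    obtain ⟨t, hen, hfe⟩ := h2
    have ht : t = wseq a m := by
      by_contra hne
      exact blocked a ha hm hne hen
    subst ht
    refine ⟨(m + 1) % KK a, Nat.mod_lt _ (KK_pos' a ha), ?_⟩
    rw [hfe, fire_step a ha hm, Mk_mod a ha hm]

lemma wrd_length : (wrd a).length = KK a := by simp [wrd]

lemma solves_main (ha : ∀ i, 1 ≤ a i) (hprime : Finset.univ.gcd a = 1)
    (hw : 0 < (wrd a).length) :
    Solves (net a) (Mk a 0) (circLTS (wrd a) hw) := by
  have hK := KK_pos' a ha
  have hlen := wrd_length a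
  -- the bijection
  set f : Fin (KK a) → {M : Fin (kP L) → ℕ // (net a).Reach (Mk a 0) M} :=
    fun m => ⟨Mk a m.val, reach_Mk a ha m.val m.isLt⟩ with hf
  have hbij : Function.Bijective f := by
    constructor
    · intro m m' h
      exact Fin.ext (Mk_inj a hprime m.isLt m'.isLt (congrArg Subtype.val h))
    · intro s
      obtain ⟨m, hm, hMs⟩ := reach_char a ha s.2
      exact ⟨⟨m, hm⟩, Subtype.ext hMs.symm⟩
  set e1 := Equiv.ofBijective f hbij with he1
  refine ⟨(e1.symm).trans (finCongr hlen.symm), ?_, ?_⟩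
  · -- initial state
    have h0 : (PetriNet.RG (net a) (Mk a 0)).init = f ⟨0, hK⟩ := Subtype.ext rfl
    simp only [Equiv.trans_apply, h0]
    have : e1.symm (f ⟨0, hK⟩) = ⟨0, hK⟩ := by
      rw [Equiv.symm_apply_eq]
      rfl
    rw [this]
    exact Fin.ext (by simp [circLTS, finCongr])
  · intro s t s'
    simp only [PetriNet.RG, circLTS]
    have hs1 : s.1 = Mk a (e1.symm s).val := by
      conv_lhs => rw [← Equiv.apply_symm_apply e1 s]
      rfl
    have hs1' : s'.1 = Mk a (e1.symm s').val := by
      conv_lhs => rw [← Equiv.apply_symm_apply e1 s']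
      rfl
    set m : Fin (KK a) := e1.symm s
    set m' : Fin (KK a) := e1.symm s'
    have hvs : ((e1.symm.trans (finCongr hlen.symm)) s).val = m.val := by
      simp [finCongr]
      rfl
    have hvs' : ((e1.symm.trans (finCongr hlen.symm)) s').val = m'.val := by
      simp [finCongr]
      rfl
    have hget : (wrd a).get ((e1.symm.trans (finCongr hlen.symm)) s) = wseq a m.val := by
      have : ∀ (i : Fin (wrd a).length), (wrd a).get i = wseq a i.val := by
        intro i
        rw [List.get_eq_getElem]
        simp [wrd, List.get_eq_getElem, List.getElem_map, List.getElem_range]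
      rw [this]
      rw [show ((e1.symm.trans (finCongr hlen.symm)) s).val = m.val from hvs]
    constructor
    · rintro ⟨hen, hfe⟩
      rw [hs1] at hen hfe
      have ht : t = wseq a m.val := by
        by_contra hne
        exact blocked a ha m.isLt hne hen
      subst ht
      constructor
      · exact hget.symm
      · rw [hvs, hvs', hlen]
        apply Mk_inj a hprime m'.isLt (Nat.mod_lt _ hK)
        rw [← hs1', hfe, fire_step a ha m.isLt, Mk_mod a ha m.isLt]
    · rintro ⟨ht, hval⟩
      rw [hget] at ht
      subst ht
      rw [hvs, hvs', hlen] at hval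
      have hstep := step_cyc a ha m.isLt
      rw [hs1, hs1']
      have : Mk a m'.val = Mk a ((m.val + 1) % KK a) := by rw [hval]
      rw [this]
      exact hstep

lemma main (ha : ∀ i, 1 ≤ a i) (hprime : Finset.univ.gcd a = 1) :
    (∀ t, parikh (wrd a) t = a t) ∧ cyclicWMGSolvable (wrd a) := by
  have hK := KK_pos' a ha
  have hw : 0 < (wrd a).length := by rw [wrd_length]; exact hK
  constructor
  · intro t
    have := count_wrd a (KK a) t
    rw [Nst_K a ha] at this
    exact this
  · exact ⟨hw, kP L, net a, Mk a 0, net_wmg a, solves_main a ha hprime hw⟩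

end Net

end
end Stmt18

/-- weak synthesis of a WMG with circular reachability graph from a
prime T-vector with full support. -/
theorem stmt18 {L : Type} [Fintype L] [DecidableEq L] [Nonempty L]
    (Υ : L → ℕ) (hpos : ∀ t, 1 ≤ Υ t) (hprime : primeVec Υ) :
    ∃ w : List L, (∀ t, parikh w t = Υ t) ∧ cyclicWMGSolvable w := by
  obtain ⟨h1, h2⟩ := Stmt18.main Υ hpos hprime
  exact ⟨Stmt18.wrd Υ, h1, h2⟩
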